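/- Let λ, σ be real numbers with σ > 0, let n ≥ 1 be a natural number and μ ∈ ℝ. Define F : ℝ² → ℝ² by F(x, y) = (σ^n·y, μ − λ^n·x + (σ^n·y − 1)²) and set ν = σ^(2n)·(μ − σ^(−n) − λ^n). Then for all X, Y ∈ ℝ, letting (x, y) = (σ^(−n)·X + 1, σ^(−2n)·Y + σ^(−n)) (the inverse of the rescaling H_n(x,y) = (σ^n(x − 1), σ^(2n)(y − σ^(−n)))), one has H_n(F(x, y)) = (Y, Y² − (λσ)^n·X + ν). (The renormalization identity: in the rescaled coordinates the return map becomes (X,Y) ↦ (Y, Y² − (λσ)^n X + ν).) -/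

import Mathlib

open Function Filter Topology

/-- The renormalization identity: in the rescaled coordinates given by
`H_n(x, y) = (σ^n (x - 1), σ^{2n} (y - σ^{-n}))`, the return map
`F(x, y) = (σ^n y, μ - λ^n x + (σ^n y - 1)²)` becomes
`(X, Y) ↦ (Y, Y² - (λσ)^n X + ν)` with `ν = σ^{2n} (μ - σ^{-n} - λ^n)`. -/
theorem stmt11 (l σ : ℝ) (hσ : 0 < σ) (n : ℕ) (hn : 1 ≤ n) (μ : ℝ)
    (F : ℝ × ℝ → ℝ × ℝ)
    (hF : F = fun p => (σ ^ n * p.2, μ - l ^ n * p.1 + (σ ^ n * p.2 - 1) ^ 2))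
    (H : ℝ × ℝ → ℝ × ℝ)
    (hH : H = fun p => (σ ^ n * (p.1 - 1), σ ^ (2 * n) * (p.2 - σ ^ (-(n : ℤ)))))
    (ν : ℝ) (hν : ν = σ ^ (2 * n) * (μ - σ ^ (-(n : ℤ)) - l ^ n)) :
    ∀ X Y : ℝ,
      H (F (σ ^ (-(n : ℤ)) * X + 1, σ ^ (-(2 * (n : ℤ))) * Y + σ ^ (-(n : ℤ)))) =
        (Y, Y ^ 2 - (l * σ) ^ n * X + ν) := by
  intro X Y
  have hσ0 : σ ≠ 0 := ne_of_gt hσ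
  subst hF hH hν
  simp only [Prod.mk.injEq]
  have h1 : σ ^ (-(n:ℤ)) = (σ ^ n)⁻¹ := by
    rw [zpow_neg, zpow_natCast]
  have h2 : σ ^ (-(2 * (n:ℤ))) = (σ ^ (2*n))⁻¹ := by
    rw [zpow_neg]
    norm_cast
  have hp : (σ:ℝ) ^ (2*n) = σ^n * σ^n := by ring
  constructor
  · simp only [h1, h2]
    field_simp [h1, h2, hp]
    ring
  · simp only [h1, h2]
    field_simp [h1, h2, hp, mul_pow]
    ring
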